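/- arXiv:math-ph/0405006 — 4 statements merged into one kernel-verified Lean document; each statement's English description precedes it below -/
import Mathlib

section
/- Let A be a D×D Hermitian matrix, p(t)=det(t−A) its characteristic polynomial, and write p(t)=t^k q(t) with q(0)≠0. Let K=max(1,‖A‖) and let 0<C≤|q(0)|. Denote by 𝒩(A,E) the number of eigenvalues of A (with multiplicity) that are ≤ E. Then for all ε∈(0,1), 𝒩(A,ε)−𝒩(A,0) ≤ (log(1/C)+D·log K)/log(1/ε). -/
open Finset

lemma eig_bound {D : ℕ} {A : Matrix (Fin D) (Fin D) ℂ} (hA : A.IsHermitian) (i : Fin D) :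
    |hA.eigenvalues i| ≤ ‖Matrix.toEuclideanCLM (𝕜 := ℂ) A‖ := by
  set v : EuclideanSpace ℂ (Fin D) := hA.eigenvectorBasis i with hv
  have hnv : ‖v‖ = 1 := hA.eigenvectorBasis.orthonormal.1 i
  have key : Matrix.toEuclideanCLM (𝕜 := ℂ) A v = hA.eigenvalues i • v := by
    apply (WithLp.equiv 2 _).injective
    change WithLp.ofLp (Matrix.toEuclideanCLM (𝕜 := ℂ) A v) = WithLp.ofLp (hA.eigenvalues i • v)
    rw [Matrix.ofLp_toEuclideanCLM]
    simpa using hA.mulVec_eigenvectorBasis i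
  have hle := (Matrix.toEuclideanCLM (𝕜 := ℂ) A).le_opNorm v
  rw [key, norm_smul, hnv, Real.norm_eq_abs, mul_one, mul_one] at hle
  exact hle

/-- Lück's lemma: for a Hermitian `D × D` matrix `A` with `K = max(1,‖A‖)` (operator norm)
and `0 < C ≤ |q(0)|`, where `q(0)` is the product of the nonzero eigenvalues of `A`
(the lowest nonvanishing coefficient of the characteristic polynomial, up to sign),
the eigenvalue counting function `𝒩(A,E) = #{i : λ_i ≤ E}` satisfies
`𝒩(A,ε) - 𝒩(A,0) ≤ (log(1/C) + D log K) / log(1/ε)` for all `ε ∈ (0,1)`. -/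
theorem stmt_0 (D : ℕ) (A : Matrix (Fin D) (Fin D) ℂ) (hA : A.IsHermitian)
    (K C : ℝ) (hK : K = max 1 ‖Matrix.toEuclideanCLM (𝕜 := ℂ) A‖)
    (hC0 : 0 < C)
    (hC : C ≤ |∏ i : Fin D, if hA.eigenvalues i = 0 then 1 else hA.eigenvalues i|)
    (ε : ℝ) (hε : ε ∈ Set.Ioo (0 : ℝ) 1) :
    ((Set.ncard {i : Fin D | hA.eigenvalues i ≤ ε} : ℝ)
        - (Set.ncard {i : Fin D | hA.eigenvalues i ≤ 0} : ℝ))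
      ≤ (Real.log (1 / C) + D * Real.log K) / Real.log (1 / ε) := by
  obtain ⟨hε0, hε1⟩ := hε
  set μ := hA.eigenvalues with hμ
  have hK1 : (1 : ℝ) ≤ K := by rw [hK]; exact le_max_left _ _
  have hK0 : (0 : ℝ) < K := lt_of_lt_of_le one_pos hK1
  have hμK : ∀ i, |μ i| ≤ K := fun i => (eig_bound hA i).trans (hK ▸ le_max_right _ _)
  set s := univ.filter (fun i => 0 < μ i ∧ μ i ≤ ε) with hs
  set m := s.card with hm
  -- LHS equals m
  have hLHS : ((Set.ncard {i : Fin D | μ i ≤ ε} : ℝ)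
        - (Set.ncard {i : Fin D | μ i ≤ 0} : ℝ)) = (m : ℝ) := by
    have h1 : Set.ncard {i : Fin D | μ i ≤ ε} = (univ.filter (fun i => μ i ≤ ε)).card := by
      rw [Set.ncard_eq_toFinset_card']; simp [Set.toFinset_setOf]
    have h2 : Set.ncard {i : Fin D | μ i ≤ 0} = (univ.filter (fun i => μ i ≤ 0)).card := by
      rw [Set.ncard_eq_toFinset_card']; simp [Set.toFinset_setOf]
    rw [h1, h2]
    have hsub : (univ.filter (fun i => μ i ≤ 0)) ⊆ (univ.filter (fun i => μ i ≤ ε)) := by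
      intro i hi; simp only [mem_filter, mem_univ, true_and] at *; linarith
    have hd : (univ.filter (fun i => μ i ≤ ε)) \ (univ.filter (fun i => μ i ≤ 0)) = s := by
      ext i; simp only [hs, mem_sdiff, mem_filter, mem_univ, true_and, not_le]; tauto
    rw [hm, ← hd, card_sdiff_of_subset hsub]
    have := card_le_card hsub
    push_cast [Nat.cast_sub this]
    ring
  rw [hLHS]
  -- product bound : C ≤ ε^m * K^D
  set f : Fin D → ℝ := fun i => |if μ i = 0 then 1 else μ i| with hf
  have hfnn : ∀ i, 0 ≤ f i := fun i => abs_nonneg _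
  have hfK : ∀ i, f i ≤ K := by
    intro i
    by_cases h : μ i = 0
    · simp [hf, h, hK1]
    · simpa [hf, h] using hμK i
  have hprod : C ≤ ∏ i, f i := by
    calc C ≤ |∏ i : Fin D, if μ i = 0 then 1 else μ i| := hC
    _ = ∏ i, f i := Finset.abs_prod _ _
  have hsplit : ∏ i, f i = (∏ i ∈ s, f i) * ∏ i ∈ sᶜ, f i :=
    (Finset.prod_mul_prod_compl s f).symm
  have h1 : ∏ i ∈ s, f i ≤ ε ^ m := by
    rw [hm, ← Finset.prod_const]
    apply Finset.prod_le_prod (fun i _ => hfnn i)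
    intro i hi
    rw [hs, mem_filter] at hi
    obtain ⟨-, h0, hle⟩ := hi
    have : μ i ≠ 0 := ne_of_gt h0
    simp only [hf]
    rw [if_neg this, abs_of_pos h0]; exact hle
  have h2 : ∏ i ∈ sᶜ, f i ≤ K ^ (sᶜ.card) := by
    rw [← Finset.prod_const]
    exact Finset.prod_le_prod (fun i _ => hfnn i) (fun i _ => hfK i)
  have h3 : K ^ (sᶜ.card) ≤ K ^ D := by
    apply pow_le_pow_right₀ hK1
    simpa using card_le_card (subset_univ sᶜ)
  have hCb : C ≤ ε ^ m * K ^ D := by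
    calc C ≤ ∏ i, f i := hprod
    _ = (∏ i ∈ s, f i) * ∏ i ∈ sᶜ, f i := hsplit
    _ ≤ ε ^ m * K ^ D := by
        apply mul_le_mul h1 (h2.trans h3) (Finset.prod_nonneg (fun i _ => hfnn i))
        positivity
  -- take logs
  have hlog : Real.log C ≤ m * Real.log ε + D * Real.log K := by
    have := Real.log_le_log hC0 hCb
    rwa [Real.log_mul (by positivity) (by positivity), Real.log_pow, Real.log_pow] at this
  have hlogε : 0 < Real.log (1 / ε) := by
    rw [Real.log_div one_ne_zero (ne_of_gt hε0), Real.log_one]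
    have := Real.log_neg hε0 hε1
    linarith
  rw [le_div_iff₀ hlogε]
  rw [Real.log_div one_ne_zero (ne_of_gt hε0), Real.log_div one_ne_zero (ne_of_gt hC0),
    Real.log_one]
  nlinarith [hlog]
end

section
/- Let ρ be a finite measure on ℝ, J∈ℕ, and Φ:ℝ^J→ℝ continuous, monotone increasing in each variable, and satisfying Φ(q+t·e)−Φ(q) ≥ t for all q∈ℝ^J and t≥0, where e=(1,…,1). Define s(ρ,ε):=sup{ρ([a,a+ε]) : a∈ℝ}. Then for any bounded interval I, the product measure satisfies (⊗^J ρ){q : Φ(q)∈I} ≤ J·s(ρ,|I|)·ρ(ℝ)^{J−1}. -/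
open MeasureTheory Filter Topology

lemma downset_step (ρ : Measure ℝ) (L : Set ℝ)
    (hL : ∀ ⦃x y : ℝ⦄, y ≤ x → x ∈ L → y ∈ L) (δ : ℝ) :
    ρ {s : ℝ | s ∈ L ∧ s + δ ∉ L} ≤ ⨆ c : ℝ, ρ (Set.Icc c (c + δ)) := by
  rcases L.eq_empty_or_nonempty with hE | hne
  · simp [hE]
  by_cases hU : L = Set.univ
  · simp [hU]
  have hbdd : BddAbove L := by
    obtain ⟨x, hx⟩ := (Set.ne_univ_iff_exists_notMem L).1 hU
    exact ⟨x, fun y hy => by by_contra h; exact hx (hL (le_of_lt (not_le.1 h)) hy)⟩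
  set c := sSup L with hc
  have hsub : {s : ℝ | s ∈ L ∧ s + δ ∉ L} ⊆ Set.Icc (c - δ) c := by
    rintro s ⟨hs1, hs2⟩
    refine ⟨?_, le_csSup hbdd hs1⟩
    by_contra h
    push_neg at h
    have hlt : s + δ < c := by linarith
    obtain ⟨y, hy, hlty⟩ := exists_lt_of_lt_csSup hne hlt
    exact hs2 (hL hlty.le hy)
  calc ρ {s : ℝ | s ∈ L ∧ s + δ ∉ L} ≤ ρ (Set.Icc (c - δ) c) := measure_mono hsub
    _ ≤ ⨆ c : ℝ, ρ (Set.Icc c (c + δ)) := by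
        have h := le_iSup (fun c : ℝ => ρ (Set.Icc c (c + δ))) (c - δ)
        simpa using h

lemma inf_sup_icc_le (ρ : Measure ℝ) [IsFiniteMeasure ρ] (ε : ℝ) :
    (⨅ m : ℕ, ⨆ c : ℝ, ρ (Set.Icc c (c + (ε + 1/(m+1))))) ≤
      ⨆ c : ℝ, ρ (Set.Icc c (c + ε)) := by
  by_contra hlt
  push_neg at hlt
  obtain ⟨t', h1, h2⟩ := exists_between hlt
  have ht'0 : 0 < t' := lt_of_le_of_lt (by simp) h1
  have hfin : (⨅ m : ℕ, ⨆ c : ℝ, ρ (Set.Icc c (c + (ε + 1/(m+1))))) ≤ ρ Set.univ :=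
    le_trans (iInf_le _ 0) (iSup_le fun c => measure_mono (Set.subset_univ _))
  have ht'top : t' < ⊤ := lt_of_lt_of_le h2 hfin |>.trans_le le_top |>.trans_le le_rfl
  -- witnesses
  have hwit : ∀ m : ℕ, ∃ c : ℝ, t' < ρ (Set.Icc c (c + (ε + 1/(m+1)))) := by
    intro m
    exact lt_iSup_iff.1 (lt_of_lt_of_le h2 (iInf_le _ m))
  choose c hc using hwit
  -- tail bounds
  have htop : Tendsto (fun k : ℕ => ρ (Set.Ici (k : ℝ))) atTop (𝓝 0) := by
    have h0 : (⋂ k : ℕ, Set.Ici (k : ℝ)) = ∅ := by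
      ext x
      simp only [Set.mem_iInter, Set.mem_Ici, Set.mem_empty_iff_false, iff_false]
      push_neg
      obtain ⟨k, hk⟩ := exists_nat_gt x
      exact ⟨k, hk⟩
    have h := tendsto_measure_iInter_atTop (μ := ρ) (s := fun k : ℕ => Set.Ici (k : ℝ))
      (fun k => measurableSet_Ici.nullMeasurableSet)
      (fun i j hij => Set.Ici_subset_Ici.2 (by exact_mod_cast hij))
      ⟨0, measure_ne_top ρ _⟩
    rw [h0] at h
    simpa [Function.comp_def] using h
  have hbot : Tendsto (fun k : ℕ => ρ (Set.Iic (-(k : ℝ)))) atTop (𝓝 0) := by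
    have h0 : (⋂ k : ℕ, Set.Iic (-(k : ℝ))) = ∅ := by
      ext x
      simp only [Set.mem_iInter, Set.mem_Iic, Set.mem_empty_iff_false, iff_false]
      push_neg
      obtain ⟨k, hk⟩ := exists_nat_gt (-x)
      exact ⟨k, by linarith⟩
    have h := tendsto_measure_iInter_atTop (μ := ρ) (s := fun k : ℕ => Set.Iic (-(k : ℝ)))
      (fun k => measurableSet_Iic.nullMeasurableSet)
      (fun i j hij => Set.Iic_subset_Iic.2 (by
        have : (i : ℝ) ≤ j := by exact_mod_cast hij
        linarith))
      ⟨0, measure_ne_top ρ _⟩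
    rw [h0] at h
    simpa [Function.comp_def] using h
  obtain ⟨K, hK⟩ : ∃ K : ℕ, ρ (Set.Ici (K : ℝ)) < t' := (htop.eventually_lt_const ht'0).exists
  obtain ⟨K', hK'⟩ : ∃ K' : ℕ, ρ (Set.Iic (-(K' : ℝ))) < t' :=
    (hbot.eventually_lt_const ht'0).exists
  -- bounds on the witnesses
  have hcub : ∀ m, c m ≤ (K : ℝ) := by
    intro m
    by_contra h
    push_neg at h
    have hsub : Set.Icc (c m) (c m + (ε + 1/(m+1))) ⊆ Set.Ici (K : ℝ) :=
      fun x hx => le_trans h.le hx.1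
    exact absurd (lt_of_lt_of_le (hc m) (measure_mono hsub)) (not_lt.2 hK.le)
  have hclb : ∀ m, -(K' : ℝ) - ε - 1 ≤ c m := by
    intro m
    by_contra h
    push_neg at h
    have h1 : 1/((m : ℝ)+1) ≤ 1 := by
      rw [div_le_one (by positivity)]
      have : (0:ℝ) ≤ m := Nat.cast_nonneg m
      linarith
    have hsub : Set.Icc (c m) (c m + (ε + 1/(m+1))) ⊆ Set.Iic (-(K' : ℝ)) := by
      intro x hx
      have := hx.2
      simp only [Set.mem_Iic]
      linarith
    exact absurd (lt_of_lt_of_le (hc m) (measure_mono hsub)) (not_lt.2 hK'.le)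
  -- Bolzano–Weierstrass
  have hbdd : Bornology.IsBounded (Set.Icc (-(K' : ℝ) - ε - 1) (K : ℝ)) :=
    Metric.isBounded_Icc _ _
  obtain ⟨cl, -, φ, hφmono, hφlim⟩ :=
    tendsto_subseq_of_bounded hbdd (x := c) (fun m => ⟨hclb m, hcub m⟩)
  -- key estimate
  have key : ∀ γ : ℝ, 0 < γ → t' ≤ ρ (Set.Icc (cl - γ) (cl + ε + γ)) := by
    intro γ hγ
    have h1 : ∀ᶠ m in atTop, (c ∘ φ) m ∈ Set.Ioo (cl - γ/2) (cl + γ/2) :=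
      hφlim (Ioo_mem_nhds (by linarith) (by linarith))
    have h2 : ∀ᶠ m : ℕ in atTop, 1/((φ m : ℝ)+1) < γ/2 :=
      ((tendsto_one_div_add_atTop_nhds_zero_nat.comp hφmono.tendsto_atTop).eventually_lt_const
        (by linarith : (0:ℝ) < γ/2))
    obtain ⟨m, hm1, hm2⟩ := (h1.and h2).exists
    have hsub : Set.Icc (c (φ m)) (c (φ m) + (ε + 1/(φ m+1))) ⊆
        Set.Icc (cl - γ) (cl + ε + γ) := by
      intro x hx
      obtain ⟨hxl, hxu⟩ := hx
      obtain ⟨ha1, ha2⟩ := hm1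
      simp only [Function.comp_apply] at ha1 ha2
      constructor <;> [linarith; linarith]
    exact le_of_lt (lt_of_lt_of_le (hc (φ m)) (measure_mono hsub))
  -- pass to the limit
  have hanti : Antitone (fun k : ℕ => Set.Icc (cl - 1/((k:ℝ)+1)) (cl + ε + 1/((k:ℝ)+1))) := by
    intro i j hij
    have h1 : 1/((j:ℝ)+1) ≤ 1/((i:ℝ)+1) := by
      apply one_div_le_one_div_of_le (by positivity)
      have : (i:ℝ) ≤ j := by exact_mod_cast hij
      linarith
    exact Set.Icc_subset_Icc (by linarith) (by linarith)
  have hseq := tendsto_measure_iInter_atTop (μ := ρ)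
    (s := fun k : ℕ => Set.Icc (cl - 1/((k:ℝ)+1)) (cl + ε + 1/((k:ℝ)+1)))
    (fun k => measurableSet_Icc.nullMeasurableSet) hanti ⟨0, measure_ne_top ρ _⟩
  have hiInter : (⋂ k : ℕ, Set.Icc (cl - 1/((k:ℝ)+1)) (cl + ε + 1/((k:ℝ)+1)))
      = Set.Icc cl (cl + ε) := by
    apply Set.Subset.antisymm
    · intro x hx
      simp only [Set.mem_iInter] at hx
      constructor
      · by_contra h
        push_neg at h
        obtain ⟨k, hk⟩ := exists_nat_one_div_lt (by linarith : (0:ℝ) < cl - x)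
        have := (hx k).1
        linarith
      · by_contra h
        push_neg at h
        obtain ⟨k, hk⟩ := exists_nat_one_div_lt (by linarith : (0:ℝ) < x - (cl + ε))
        have := (hx k).2
        linarith
    · intro x hx
      simp only [Set.mem_iInter]
      intro k
      have : (0:ℝ) < 1/((k:ℝ)+1) := by positivity
      exact ⟨by linarith [hx.1], by linarith [hx.2]⟩
  rw [hiInter] at hseq
  have ht'le : t' ≤ ρ (Set.Icc cl (cl + ε)) :=
    ge_of_tendsto hseq (Eventually.of_forall fun k => key (1/((k:ℝ)+1)) (by positivity))
  have : t' ≤ ⨆ c : ℝ, ρ (Set.Icc c (c + ε)) :=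
    le_trans ht'le (le_iSup (fun c : ℝ => ρ (Set.Icc c (c + ε))) cl)
  exact lt_irrefl t' (lt_of_le_of_lt this h1)

lemma stollmann_core (ρ : Measure ℝ) [IsFiniteMeasure ρ] (n : ℕ)
    (Φ : (Fin (n+1) → ℝ) → ℝ) (hcont : Continuous Φ)
    (hmono : ∀ q q' : Fin (n+1) → ℝ, (∀ i, q i ≤ q' i) → Φ q ≤ Φ q')
    (hshift : ∀ (q : Fin (n+1) → ℝ) (t : ℝ), 0 ≤ t → t ≤ Φ (fun i => q i + t) - Φ q)
    (a b δ : ℝ) (hab : a ≤ b) (hδ : b - a < δ) :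
    (Measure.pi fun _ : Fin (n+1) => ρ) {q | Φ q ∈ Set.Icc a b}
      ≤ ((n + 1 : ℕ) : ENNReal) * (⨆ c : ℝ, ρ (Set.Icc c (c + δ))) * (ρ Set.univ) ^ n := by
  have hδ0 : 0 ≤ δ := le_trans (by linarith) hδ.le
  set μ := Measure.pi fun _ : Fin (n+1) => ρ with hμ
  set v : ℕ → Fin (n+1) → ℝ := fun k i => if (i : ℕ) < k then δ else 0 with hv
  set M : ℕ → Set (Fin (n+1) → ℝ) := fun k => {q | Φ (fun i => q i + v k i) ≤ b} with hM
  have hMcont : ∀ k, Continuous fun q : Fin (n+1) → ℝ => Φ (fun i => q i + v k i) :=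
    fun k => hcont.comp (continuous_pi fun i => (continuous_apply i).add continuous_const)
  have hMmeas : ∀ k, MeasurableSet (M k) := fun k =>
    measurableSet_le (hMcont k).measurable measurable_const
  -- the target set is inside M 0 and misses M (n+1)
  have hA0 : {q | Φ q ∈ Set.Icc a b} ⊆ M 0 := by
    intro q hq
    have h0 : (fun i : Fin (n+1) => q i + v 0 i) = q := by
      funext i; simp [hv]
    simp only [hM, Set.mem_setOf_eq, h0]
    exact hq.2
  have hAJ : ∀ q ∈ {q | Φ q ∈ Set.Icc a b}, q ∉ M (n+1) := by
    intro q hq hqM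
    have h1 : (fun i : Fin (n+1) => q i + v (n+1) i) = (fun i => q i + δ) := by
      funext i; simp [hv, i.isLt]
    simp only [hM, Set.mem_setOf_eq, h1] at hqM
    have h2 := hshift q δ hδ0
    have h3 : a ≤ Φ q := hq.1
    linarith
  have hcover : {q | Φ q ∈ Set.Icc a b} ⊆ ⋃ k ∈ Finset.range (n+1), (M k \ M (k+1)) := by
    intro q hq
    by_contra hq'
    have key : ∀ k, k ≤ n+1 → q ∈ M k := by
      intro k
      induction k with
      | zero => intro _; exact hA0 hq
      | succ m ih =>
        intro hm
        have hqm : q ∈ M m := ih (by omega)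
        by_contra hq2
        exact hq' (Set.mem_iUnion₂.2 ⟨m, Finset.mem_range.2 (by omega), ⟨hqm, hq2⟩⟩)
    exact hAJ q hq (key (n+1) le_rfl)
  -- per-step bound via Fubini
  have hstep : ∀ k, k < n+1 → μ (M k \ M (k+1)) ≤
      (⨆ c : ℝ, ρ (Set.Icc c (c + δ))) * (ρ Set.univ) ^ n := by
    intro k hk
    set i₀ : Fin (n+1) := ⟨k, hk⟩ with hi₀
    set e := MeasurableEquiv.piFinSuccAbove (fun _ : Fin (n+1) => ℝ) i₀ with he
    set π := Measure.pi fun _ : Fin n => ρ with hπ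
    have hmp := measurePreserving_piFinSuccAbove (fun _ : Fin (n+1) => ρ) i₀
    have hS : MeasurableSet (M k \ M (k+1)) := (hMmeas k).diff (hMmeas (k+1))
    have hT : MeasurableSet (e.symm ⁻¹' (M k \ M (k+1))) :=
      e.symm.measurable hS
    have hμS : μ (M k \ M (k+1)) = (ρ.prod π) (e.symm ⁻¹' (M k \ M (k+1))) := by
      rw [← hmp.map_eq, MeasurableEquiv.map_apply]
      congr 1
      ext q
      simp only [he, Set.mem_preimage, MeasurableEquiv.symm_apply_apply]
    rw [hμS, Measure.prod_apply_symm hT]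
    have hpt : ∀ y : Fin n → ℝ,
        ρ ((fun x => (x, y)) ⁻¹' (e.symm ⁻¹' (M k \ M (k+1)))) ≤
          ⨆ c : ℝ, ρ (Set.Icc c (c + δ)) := by
      intro y
      set L : Set ℝ := {x | Φ (fun j => (Fin.insertNth (α := fun _ => ℝ) i₀ x y) j + v k j) ≤ b} with hL
      have hdc : ∀ ⦃x x' : ℝ⦄, x' ≤ x → x ∈ L → x' ∈ L := by
        intro x x' hxx hx
        refine le_trans (hmono _ _ ?_) hx
        intro j
        have hj : Fin.insertNth (α := fun _ => ℝ) i₀ x' y j ≤ Fin.insertNth (α := fun _ => ℝ) i₀ x y j := by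
          refine Fin.succAboveCases (α := fun j => Fin.insertNth (α := fun _ => ℝ) i₀ x' y j ≤ Fin.insertNth (α := fun _ => ℝ) i₀ x y j)
            i₀ ?_ ?_ j
          · simpa using hxx
          · intro m; simp
        linarith
      have hsymm : ∀ x : ℝ, e.symm (x, y) = Fin.insertNth (α := fun _ => ℝ) i₀ x y := fun x => rfl
      have harg : ∀ x : ℝ, (fun j => (Fin.insertNth (α := fun _ => ℝ) i₀ x y) j + v (k+1) j)
            = (fun j => (Fin.insertNth (α := fun _ => ℝ) i₀ (x + δ) y) j + v k j) := by
        intro x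
        funext j
        refine Fin.succAboveCases
          (α := fun j => Fin.insertNth (α := fun _ => ℝ) i₀ x y j + v (k+1) j = Fin.insertNth (α := fun _ => ℝ) i₀ (x + δ) y j + v k j)
          i₀ ?_ ?_ j
        · simp [hv, hi₀]
        · intro m
          have hne : ((i₀.succAbove m : Fin (n+1)) : ℕ) ≠ k := by
            intro h
            exact Fin.succAbove_ne i₀ m (Fin.ext h)
          simp only [Fin.insertNth_apply_succAbove, hv]
          congr 1
          rcases Nat.lt_or_ge ((i₀.succAbove m : Fin (n+1)) : ℕ) k with h | h
          · rw [if_pos h, if_pos (by omega)]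
          · rw [if_neg (by omega), if_neg (by omega)]
      have hset : (fun x => (x, y)) ⁻¹' (e.symm ⁻¹' (M k \ M (k+1)))
          = {x | x ∈ L ∧ x + δ ∉ L} := by
        ext x
        simp only [Set.mem_preimage, hsymm, Set.mem_diff, hM, Set.mem_setOf_eq, hL]
        constructor
        · rintro ⟨h1, h2⟩
          exact ⟨h1, by rw [← harg x]; exact h2⟩
        · rintro ⟨h1, h2⟩
          exact ⟨h1, by rw [harg x]; exact h2⟩
      rw [hset]
      exact downset_step ρ L hdc δ
    calc (∫⁻ y, ρ ((fun x => (x, y)) ⁻¹' (e.symm ⁻¹' (M k \ M (k+1)))) ∂π)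
        ≤ ∫⁻ _, (⨆ c : ℝ, ρ (Set.Icc c (c + δ))) ∂π := lintegral_mono hpt
      _ = (⨆ c : ℝ, ρ (Set.Icc c (c + δ))) * π Set.univ := lintegral_const _
      _ = (⨆ c : ℝ, ρ (Set.Icc c (c + δ))) * (ρ Set.univ) ^ n := by
          rw [hπ, Measure.pi_univ]
          simp [Finset.prod_const, Finset.card_univ]
  -- put everything together
  calc μ {q | Φ q ∈ Set.Icc a b}
      ≤ μ (⋃ k ∈ Finset.range (n+1), (M k \ M (k+1))) := measure_mono hcover
    _ ≤ ∑ k ∈ Finset.range (n+1), μ (M k \ M (k+1)) := measure_biUnion_finset_le _ _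
    _ ≤ ∑ _k ∈ Finset.range (n+1), (⨆ c : ℝ, ρ (Set.Icc c (c + δ))) * (ρ Set.univ) ^ n :=
        Finset.sum_le_sum fun k hk => hstep k (Finset.mem_range.1 hk)
    _ = ((n + 1 : ℕ) : ENNReal) * (⨆ c : ℝ, ρ (Set.Icc c (c + δ))) * (ρ Set.univ) ^ n := by
        rw [Finset.sum_const, Finset.card_range, nsmul_eq_mul, mul_assoc]

/-- Stollmann's lemma: let `ρ` be a finite measure on `ℝ` and `Φ : ℝ^J → ℝ` continuous,
monotone in each variable, with `Φ(q + t·e) - Φ(q) ≥ t` for `t ≥ 0` (`e = (1,…,1)`).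
With `s(ρ,ε) = sup_a ρ([a,a+ε])`, for any bounded interval `I = [a,b]` the product
measure satisfies `(⊗^J ρ){q : Φ(q) ∈ I} ≤ J · s(ρ,|I|) · ρ(ℝ)^(J-1)`. -/
theorem stmt_7 (ρ : Measure ℝ) [IsFiniteMeasure ρ] (J : ℕ)
    (Φ : (Fin J → ℝ) → ℝ) (hcont : Continuous Φ)
    (hmono : ∀ q q' : Fin J → ℝ, (∀ i, q i ≤ q' i) → Φ q ≤ Φ q')
    (hshift : ∀ (q : Fin J → ℝ) (t : ℝ), 0 ≤ t → t ≤ Φ (fun i => q i + t) - Φ q)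
    (a b : ℝ) (hab : a ≤ b) :
    (Measure.pi fun _ : Fin J => ρ) {q | Φ q ∈ Set.Icc a b}
      ≤ (J : ENNReal) * (⨆ c : ℝ, ρ (Set.Icc c (c + (b - a)))) * (ρ Set.univ) ^ (J - 1) := by
  rcases J with _ | n
  · exfalso
    have h := hshift (fun _ => 0) 1 zero_le_one
    have h0 : (fun i : Fin 0 => (fun _ : Fin 0 => (0:ℝ)) i + 1) = (fun _ => (0:ℝ)) := by
      funext i; exact i.elim0
    rw [h0] at h
    linarith
  · set ε := b - a with hε
    set N : ENNReal := ((n + 1 : ℕ) : ENNReal) with hN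
    set C : ENNReal := (ρ Set.univ) ^ n with hC
    have hcore : ∀ m : ℕ,
        (Measure.pi fun _ : Fin (n+1) => ρ) {q | Φ q ∈ Set.Icc a b}
          ≤ N * (⨆ c : ℝ, ρ (Set.Icc c (c + (ε + 1/(m+1))))) * C := by
      intro m
      refine stollmann_core ρ n Φ hcont hmono hshift a b (ε + 1/(m+1)) hab ?_
      have h1 : (0:ℝ) < 1/((m:ℝ)+1) := by positivity
      rw [hε] at *
      linarith
    show _ ≤ N * (⨆ c : ℝ, ρ (Set.Icc c (c + ε))) * C
    by_cases hC0 : C = 0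
    · have := hcore 0
      rw [hC0, mul_zero] at this ⊢
      exact this
    have hCtop : C ≠ ⊤ := by
      rw [hC]
      exact ENNReal.pow_ne_top (measure_ne_top ρ _)
    have hN0 : N ≠ 0 := by
      rw [hN]; exact Nat.cast_ne_zero.2 (Nat.succ_ne_zero n)
    have hNtop : N ≠ ⊤ := by
      rw [hN]; exact ENNReal.natCast_ne_top _
    have hle : (Measure.pi fun _ : Fin (n+1) => ρ) {q | Φ q ∈ Set.Icc a b}
        ≤ ⨅ m : ℕ, N * (⨆ c : ℝ, ρ (Set.Icc c (c + (ε + 1/(m+1))))) * C :=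
      le_iInf hcore
    have heq : (⨅ m : ℕ, N * (⨆ c : ℝ, ρ (Set.Icc c (c + (ε + 1/(m+1))))) * C)
        = (N * C) * ⨅ m : ℕ, ⨆ c : ℝ, ρ (Set.Icc c (c + (ε + 1/(m+1)))) := by
      have hcomm : ∀ m : ℕ, N * (⨆ c : ℝ, ρ (Set.Icc c (c + (ε + 1/(m+1))))) * C
          = (N * C) * (⨆ c : ℝ, ρ (Set.Icc c (c + (ε + 1/(m+1))))) := fun m => by ring
      simp_rw [hcomm]
      exact (ENNReal.mul_iInf_of_ne (mul_ne_zero hN0 hC0) (ENNReal.mul_ne_top hNtop hCtop)).symm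
    have hfinal : (N * C) * (⨅ m : ℕ, ⨆ c : ℝ, ρ (Set.Icc c (c + (ε + 1/(m+1)))))
        ≤ (N * C) * ⨆ c : ℝ, ρ (Set.Icc c (c + ε)) :=
      by gcongr; exact inf_sup_icc_le ρ ε
    calc (Measure.pi fun _ : Fin (n+1) => ρ) {q | Φ q ∈ Set.Icc a b}
        ≤ (N * C) * ⨅ m : ℕ, ⨆ c : ℝ, ρ (Set.Icc c (c + (ε + 1/(m+1)))) := heq ▸ hle
      _ ≤ (N * C) * ⨆ c : ℝ, ρ (Set.Icc c (c + ε)) := hfinal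
      _ = N * (⨆ c : ℝ, ρ (Set.Icc c (c + ε))) * C := by ring
end

section
/- Let H be a self-adjoint operator on a finite-dimensional space ℓ²(Λ), Λ finite, and for j in a subset A⊂Λ let δ_j denote the rank-one projection onto the j-th coordinate. Let ψ be a normalized eigenvector of H_q := H + Σ_{j∈Λ} q_j δ_j with eigenvalue E_n(q)∈I, where I is an interval with dist(I, (a,b)^c) ≥ δ > 0. Suppose the operator H + V^sing (obtained by replacing q_j, j∈A, by a fixed value q_c=b+s₊+1) has no spectrum in (a,b), and q_j ∈ (a+s₋, b+s₊) for all j∈A. Then Σ_{j∈A} ⟨ψ, δ_j ψ⟩ ≥ (δ/(b−a+s₊−s₋+1))². -/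
open Matrix

/-- Eigenvector mass lower bound: let `H` be symmetric on `ℓ²(Λ)`, `Λ = Fin D`, with
spectrum in `[sm,sp]`, let `ψ` be a normalized eigenvector of `H_q = H + diag(q)` with
eigenvalue `E ∈ I`, where `dist(I,(a,b)ᶜ) ≥ δ > 0`, suppose `q_j ∈ (a+sm, b+sp)` for
`j ∈ A`, and suppose the operator obtained by replacing `q_j` (`j ∈ A`) by
`q_c = b+sp+1` has no spectrum in `(a,b)`.  Then
`Σ_{j∈A} ⟨ψ, δ_j ψ⟩ ≥ (δ/(b-a+sp-sm+1))²`. -/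
theorem stmt_10 (D : ℕ) (H : Matrix (Fin D) (Fin D) ℝ) (hH : H.IsSymm)
    (sm sp a b δ : ℝ) (hδ : 0 < δ)
    (hspecH : ∀ (μ : ℝ) (φ : Fin D → ℝ), φ ≠ 0 → H.mulVec φ = μ • φ → μ ∈ Set.Icc sm sp)
    (A : Finset (Fin D)) (q : Fin D → ℝ)
    (hq : ∀ j ∈ A, q j ∈ Set.Ioo (a + sm) (b + sp))
    (I : Set ℝ) (hI : ∀ x ∈ I, ∀ y ∉ Set.Ioo a b, δ ≤ |x - y|)
    (E : ℝ) (hE : E ∈ I)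
    (ψ : Fin D → ℝ) (hψ : ∑ j, ψ j ^ 2 = 1)
    (heig : (H + Matrix.diagonal q).mulVec ψ = E • ψ)
    (hsing : ∀ (μ : ℝ) (φ : Fin D → ℝ), φ ≠ 0 →
      (H + Matrix.diagonal fun j => if j ∈ A then b + sp + 1 else q j).mulVec φ = μ • φ →
      μ ∉ Set.Ioo a b) :
    (δ / (b - a + sp - sm + 1)) ^ 2 ≤ ∑ j ∈ A, ψ j ^ 2 := by
  have hψ0 : ψ ≠ 0 := by
    intro h; rw [h] at hψ; simp at hψ
  set C : ℝ := b - a + sp - sm + 1 with hC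
  set q' : Fin D → ℝ := fun j => if j ∈ A then b + sp + 1 else q j with hq'
  set K : Matrix (Fin D) (Fin D) ℝ := H + Matrix.diagonal q' with hKdef
  have hK : K.IsHermitian := by
    rw [Matrix.IsHermitian, Matrix.conjTranspose_eq_transpose_of_trivial]
    exact (hH.add (Matrix.isSymm_diagonal q'))
  rcases A.eq_empty_or_nonempty with hAe | hAne
  · exfalso
    have hqq : q' = q := by funext j; simp [hq', hAe]
    have h1 := hsing E ψ hψ0 (by rw [hKdef, hqq]; exact heig)
    have h2 := hI E hE E
    by_cases hEab : E ∈ Set.Ioo a b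
    · exact h1 hEab
    · have := h2 hEab; simp at this; linarith
  obtain ⟨j0, hj0⟩ := hAne
  have hCpos : (0:ℝ) < C := by
    have := hq j0 hj0; rw [hC]; cases this; linarith
  set v : Fin D → ℝ := K.mulVec ψ - E • ψ with hv
  have hmat : K - (H + Matrix.diagonal q) = Matrix.diagonal (q' - q) := by
    ext i j
    rcases eq_or_ne i j with rfl | h
    · simp [hKdef, Matrix.diagonal_apply, Matrix.sub_apply, Matrix.add_apply]
    · simp [hKdef, Matrix.diagonal_apply, h, Matrix.sub_apply, Matrix.add_apply]
  have hvdiag : v = Matrix.diagonal (q' - q) *ᵥ ψ := by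
    rw [hv, ← heig, ← Matrix.sub_mulVec, hmat]
  have hvj : ∀ j, v j = (q' j - q j) * ψ j := by
    intro j; rw [hvdiag]; simp [Matrix.mulVec_diagonal]
  have hupper : ∑ j, v j ^ 2 ≤ C ^ 2 * ∑ j ∈ A, ψ j ^ 2 := by
    have h1 : ∑ j, v j ^ 2 = ∑ j ∈ A, ((q' j - q j) * ψ j) ^ 2 := by
      rw [← Finset.sum_subset (Finset.subset_univ A)]
      · exact Finset.sum_congr rfl fun j _ => by rw [hvj]
      · intro j _ hjA; rw [hvj]; simp [hq', hjA]
    rw [h1, Finset.mul_sum]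
    apply Finset.sum_le_sum
    intro j hj
    have hqj := hq j hj
    have h2 : q' j - q j = b + sp + 1 - q j := by simp [hq', hj]
    rw [mul_pow]
    have h3 : (q' j - q j) ^ 2 ≤ C ^ 2 := by
      rw [h2]
      have h4 : 0 ≤ b + sp + 1 - q j := by cases hqj; linarith
      have h5 : b + sp + 1 - q j ≤ C := by cases hqj; rw [hC]; linarith
      nlinarith
    nlinarith [sq_nonneg (ψ j), sq_nonneg (q' j - q j)]
  -- spectral lower bound
  set e := hK.eigenvectorBasis with he
  set μ := hK.eigenvalues with hμ
  have heigvec : ∀ i, K *ᵥ ⇑(e i) = μ i • ⇑(e i) := hK.mulVec_eigenvectorBasis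
  have hμab : ∀ i, μ i ∉ Set.Ioo a b := by
    intro i
    have hne : ⇑(e i) ≠ 0 := by
      intro h
      have h1 := e.orthonormal.1 i
      rw [show (e i : EuclideanSpace ℝ (Fin D)) = 0 from WithLp.ofLp_injective 2 h] at h1
      simp at h1
    exact hsing (μ i) (e i) hne (heigvec i)
  have hδμ : ∀ i, δ ^ 2 ≤ (μ i - E) ^ 2 := by
    intro i
    have h1 := hI E hE (μ i) (hμab i)
    calc δ ^ 2 ≤ |E - μ i| ^ 2 := by nlinarith [abs_nonneg (E - μ i)]
    _ = (μ i - E) ^ 2 := by rw [sq_abs]; ring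
  set ψ' : EuclideanSpace ℝ (Fin D) := WithLp.toLp 2 ψ with hψ'
  set v' : EuclideanSpace ℝ (Fin D) := WithLp.toLp 2 v with hv'
  have hinner : ∀ (x : EuclideanSpace ℝ (Fin D)) i, e.repr x i = (⇑(e i)) ⬝ᵥ x := by
    intro x i
    rw [e.repr_apply_apply]
    simp [inner, dotProduct, mul_comm]
  have hKT : Kᵀ = K := by
    rw [← Matrix.conjTranspose_eq_transpose_of_trivial]; exact hK
  have hrepr_v : ∀ i, e.repr v' i = (μ i - E) * e.repr ψ' i := by
    intro i
    rw [hinner, hinner]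
    show (⇑(e i)) ⬝ᵥ (K *ᵥ ψ - E • ψ) = (μ i - E) * ((⇑(e i)) ⬝ᵥ ψ)
    have h2 : (⇑(e i)) ⬝ᵥ (K *ᵥ ψ) = μ i * ((⇑(e i)) ⬝ᵥ ψ) := by
      rw [Matrix.dotProduct_mulVec, ← Matrix.mulVec_transpose, hKT, heigvec i,
        smul_dotProduct]
      simp [smul_eq_mul]
    rw [dotProduct_sub, h2, dotProduct_smul]
    simp [smul_eq_mul]
    ring
  have hnorm : ∀ x : EuclideanSpace ℝ (Fin D), ∑ i, (e.repr x i) ^ 2 = ∑ j, x j ^ 2 := by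
    intro x
    have h2 : ∀ y : EuclideanSpace ℝ (Fin D), ‖y‖ ^ 2 = ∑ j, y j ^ 2 := by
      intro y
      rw [EuclideanSpace.norm_eq, Real.sq_sqrt (by positivity)]
      simp [sq_abs]
    calc ∑ i, (e.repr x i) ^ 2 = ‖e.repr x‖ ^ 2 := (h2 _).symm
    _ = ‖x‖ ^ 2 := by rw [e.repr.norm_map x]
    _ = ∑ j, x j ^ 2 := h2 x
  have hSum : ∑ i, (e.repr ψ' i) ^ 2 = 1 := by rw [hnorm ψ']; exact hψ
  have hlow : δ ^ 2 ≤ ∑ j, v j ^ 2 := by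
    have h1 : ∑ j, v j ^ 2 = ∑ i, (e.repr v' i) ^ 2 := (hnorm v').symm
    rw [h1]
    calc δ ^ 2 = ∑ i, δ ^ 2 * (e.repr ψ' i) ^ 2 := by rw [← Finset.mul_sum, hSum, mul_one]
    _ ≤ ∑ i, (μ i - E) ^ 2 * (e.repr ψ' i) ^ 2 :=
        Finset.sum_le_sum fun i _ => mul_le_mul_of_nonneg_right (hδμ i) (sq_nonneg _)
    _ = ∑ i, (e.repr v' i) ^ 2 := Finset.sum_congr rfl fun i _ => by rw [hrepr_v]; ring
  have hfin : δ ^ 2 ≤ C ^ 2 * ∑ j ∈ A, ψ j ^ 2 := le_trans hlow hupper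
  rw [div_pow, div_le_iff₀ (pow_pos hCpos 2)]
  linarith
end

section
/- Let H be a self-adjoint operator on ℓ²(X), X countable, with finite hopping range R (i.e. ⟨δ_k, Hδ_j⟩=0 when dist(k,j)≥R). Suppose the unique continuation property holds at energy E: any eigenfunction f with Hf=Ef that vanishes on the outer 2R-boundary ∂^o_{2R}Λ of a finite set Λ also vanishes on Λ. Then for every finite Λ⊂X, dim ran(χ_Λ P_E) ≤ |∂^o_{2R}Λ|, where P_E is the spectral projection onto ker(H−E). -/
/-- `delta X k` is the standard basis vector `δ_k` of `ℓ²(X)`. -/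
noncomputable def delta (X : Type*) [DecidableEq X] (k : X) : lp (fun _ : X => ℂ) 2 :=
  lp.single 2 k 1

/-- `resMap X Λ` is the coordinate restriction `χ_Λ : ℓ²(X) → ℂ^Λ`, `g ↦ g↾Λ`. -/
noncomputable def resMap (X : Type*) (Λ : Finset X) :
    lp (fun _ : X => ℂ) 2 →ₗ[ℂ] (Λ → ℂ) where
  toFun g := fun k => g k.1
  map_add' g h := by funext k; simp
  map_smul' c g := by funext k; simp

/-- Unique continuation implies a rank bound: let `H` be self-adjoint on `ℓ²(X)` with
finite hopping range `R` for a distance function `d` (matrix elements vanish when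
`d(k,j) ≥ R`).  If every eigenfunction `f` with `H f = E f` vanishing on the outer
`2R`-boundary of a finite set vanishes on the set itself, then for every finite
`Λ ⊆ X` the rank of `χ_Λ P_E` (the image under `χ_Λ` of the eigenspace `ker(H-E)`)
is at most `|∂^o_{2R} Λ|`. -/
theorem stmt_17 (X : Type*) [DecidableEq X] [Countable X] (d : X → X → ℕ)
    (H : lp (fun _ : X => ℂ) 2 →L[ℂ] lp (fun _ : X => ℂ) 2) (hsa : IsSelfAdjoint H)
    (R : ℕ)
    (hrange : ∀ k j, R ≤ d k j → (inner ℂ (delta X k) (H (delta X j)) : ℂ) = 0)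
    (E : ℝ)
    (hucp : ∀ (Λ : Finset X) (f : lp (fun _ : X => ℂ) 2), H f = (E : ℂ) • f →
      (∀ k, k ∉ Λ → (∃ j ∈ Λ, d k j ≤ 2 * R) → f k = 0) → ∀ k ∈ Λ, f k = 0)
    (Λ bd : Finset X)
    (hbd : ∀ k, k ∈ bd ↔ k ∉ Λ ∧ ∃ j ∈ Λ, d k j ≤ 2 * R) :
    Module.rank ℂ
        (Submodule.map (resMap X Λ)
          (LinearMap.ker ((H : lp (fun _ : X => ℂ) 2 →ₗ[ℂ] lp (fun _ : X => ℂ) 2)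
            - (E : ℂ) • LinearMap.id)))
      ≤ (bd.card : Cardinal) := by
  classical
  set K := LinearMap.ker ((H : lp (fun _ : X => ℂ) 2 →ₗ[ℂ] lp (fun _ : X => ℂ) 2)
      - (E : ℂ) • LinearMap.id) with hK
  set A := (resMap X Λ).comp K.subtype with hA
  set B := (resMap X bd).comp K.subtype with hB
  have hmap : Submodule.map (resMap X Λ) K = LinearMap.range A := by
    rw [hA, LinearMap.range_comp, Submodule.range_subtype]
  rw [hmap]
  have hker : LinearMap.ker B ≤ LinearMap.ker A := by
    intro f hf
    have hfK : (f : lp (fun _ : X => ℂ) 2) ∈ K := f.2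
    have heig : H (f : lp (fun _ : X => ℂ) 2) = (E : ℂ) • (f : lp (fun _ : X => ℂ) 2) := by
      have h0 := LinearMap.mem_ker.mp hfK
      rw [LinearMap.sub_apply, LinearMap.smul_apply, LinearMap.id_apply, sub_eq_zero] at h0
      exact h0
    have hBf : B f = 0 := hf
    have hbdzero : ∀ k, k ∉ Λ → (∃ j ∈ Λ, d k j ≤ 2 * R) →
        (f : lp (fun _ : X => ℂ) 2) k = 0 := by
      intro k hk hj
      exact congrFun hBf ⟨k, (hbd k).2 ⟨hk, hj⟩⟩
    have hz := hucp Λ f heig hbdzero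
    show A f = 0
    funext k
    exact hz k.1 k.2
  have e1 : Module.rank ℂ (LinearMap.range A) = Module.rank ℂ (K ⧸ LinearMap.ker A) :=
    A.quotKerEquivRange.symm.rank_eq
  have e2 : Module.rank ℂ (K ⧸ LinearMap.ker B) = Module.rank ℂ (LinearMap.range B) :=
    B.quotKerEquivRange.rank_eq
  have hsurj : Function.Surjective
      (Submodule.mapQ (LinearMap.ker B) (LinearMap.ker A) LinearMap.id
        (by simpa using hker)) := by
    intro x
    obtain ⟨y, rfl⟩ := (LinearMap.ker A).mkQ_surjective x
    exact ⟨(LinearMap.ker B).mkQ y, by simp [Submodule.mapQ_apply]⟩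
  have h1 : Module.rank ℂ (K ⧸ LinearMap.ker A) ≤ Module.rank ℂ (K ⧸ LinearMap.ker B) :=
    LinearMap.rank_le_of_surjective _ hsurj
  have h2 : Module.rank ℂ (LinearMap.range B) ≤ Module.rank ℂ (bd → ℂ) :=
    Submodule.rank_le _
  have h3 : Module.rank ℂ ({ x // x ∈ bd } → ℂ) = (bd.card : Cardinal) := by
    rw [rank_fun']
    simp
  calc Module.rank ℂ (LinearMap.range A)
      = Module.rank ℂ (K ⧸ LinearMap.ker A) := e1
    _ ≤ Module.rank ℂ (K ⧸ LinearMap.ker B) := h1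
    _ = Module.rank ℂ (LinearMap.range B) := e2
    _ ≤ Module.rank ℂ ({ x // x ∈ bd } → ℂ) := h2
    _ = (bd.card : Cardinal) := h3
end
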